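/- Let m, n, t be integers with m > n ≥ 1, t ≥ 1 and 2t < m, and let a, β_1, β_2, β_4, …, β_{2t} be rational numbers. If β_1·T((1+x)^m) + Σ_{i=1}^{t} β_{2i}·T^{2i}((1+x)^m) + a·x^n·(1+x)^{m−n} = 0 in ℚ[x], then β_{2i} = 0 for every i with 2i > n. -/

import Mathlib

open Polynomial

/-- The operator `T p = x · p'` on `ℚ[x]`. -/
noncomputable def T : Polynomial ℚ → Polynomial ℚ := fun p => X * derivative p

lemma coeff_T (p : Polynomial ℚ) (j : ℕ) : (T p).coeff j = (j : ℚ) * p.coeff j := by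
  unfold T
  cases j with
  | zero => simp [mul_coeff_zero]
  | succ k =>
    rw [coeff_X_mul, coeff_derivative]
    push_cast
    ring

lemma coeff_T_iter (k : ℕ) (p : Polynomial ℚ) (j : ℕ) :
    (T^[k] p).coeff j = (j : ℚ) ^ k * p.coeff j := by
  induction k with
  | zero => simp
  | succ k ih =>
    rw [Function.iterate_succ_apply', coeff_T, ih, pow_succ]
    ring

lemma key_fact (m n j : ℕ) (hn : n ≤ j) (hj : j ≤ m) :
    ((m - n).factorial * j.descFactorial n * m.choose j : ℚ)
      = (m - n).choose (j - n) * m.factorial := by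
  have h1 : ((j - n).factorial * j.descFactorial n : ℚ) = j.factorial := by
    exact_mod_cast congrArg (Nat.cast : ℕ → ℚ) (Nat.factorial_mul_descFactorial hn)
  have h2 : (m.choose j * j.factorial * (m - j).factorial : ℚ) = m.factorial := by
    exact_mod_cast congrArg (Nat.cast : ℕ → ℚ) (Nat.choose_mul_factorial_mul_factorial hj)
  have h3' : (m - n).choose (j - n) * (j - n).factorial * (m - j).factorial
      = (m - n).factorial := by
    have := Nat.choose_mul_factorial_mul_factorial (show j - n ≤ m - n by omega)
    rwa [show m - n - (j - n) = m - j by omega] at this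
  have h3 : ((m - n).choose (j - n) * (j - n).factorial * (m - j).factorial : ℚ)
      = (m - n).factorial := by exact_mod_cast congrArg (Nat.cast : ℕ → ℚ) h3'
  linear_combination ((m - n).choose (j - n) : ℚ) * h2
    - (j.descFactorial n : ℚ) * (m.choose j : ℚ) * h3
    + ((m - n).choose (j - n) : ℚ) * (m.choose j : ℚ) * ((m - j).factorial : ℚ) * h1

/-- Let `m > n ≥ 1`, `t ≥ 1`, `2t < m`, and let `a, β₁, β₂, β₄, …, β_{2t}` be rationals.
If `β₁·T((1+x)^m) + Σ_{i=1}^{t} β_{2i}·T^{2i}((1+x)^m) + a·x^n·(1+x)^{m−n} = 0` in `ℚ[x]`,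
then `β_{2i} = 0` for every `i` with `2i > n`. -/
theorem stmt4 (m n t : ℕ) (hmn : n < m) (hn : 1 ≤ n) (ht : 1 ≤ t) (htm : 2 * t < m)
    (a β₁ : ℚ) (β : ℕ → ℚ)
    (h : C β₁ * T^[1] ((1 + X) ^ m)
        + ∑ i ∈ Finset.Icc 1 t, C (β (2 * i)) * T^[2 * i] ((1 + X) ^ m)
        + C a * X ^ n * (1 + X) ^ (m - n) = 0) :
    ∀ i : ℕ, 1 ≤ i → i ≤ t → n < 2 * i → β (2 * i) = 0 := by
  set c : ℚ := -(a * (m - n).factorial / m.factorial) with hc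
  set q : Polynomial ℚ :=
    C β₁ * X + ∑ i ∈ Finset.Icc 1 t, C (β (2 * i)) * X ^ (2 * i)
      - C c * descPochhammer ℚ n with hq
  -- coefficient equation from h
  have hcoeff : ∀ j : ℕ,
      β₁ * ((j : ℚ) * m.choose j)
        + ∑ i ∈ Finset.Icc 1 t, β (2 * i) * ((j : ℚ) ^ (2 * i) * m.choose j)
        + a * (if n ≤ j then ((m - n).choose (j - n) : ℚ) else 0) = 0 := by
    intro j
    have hc0 := congrArg (fun p => Polynomial.coeff p j) h
    simp only [coeff_add, coeff_zero, finset_sum_coeff, coeff_C_mul] at hc0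
    have hrw : C a * X ^ n * (1 + X) ^ (m - n) = C a * (1 + X) ^ (m - n) * X ^ n := by ring
    rw [hrw, coeff_mul_X_pow', coeff_C_mul, coeff_one_add_X_pow] at hc0
    simp only [coeff_T_iter, coeff_one_add_X_pow, pow_one] at hc0
    convert hc0 using 2
    split <;> simp
  -- q evaluates to 0 at 0,...,m
  have heval : ∀ j : ℕ, j ≤ m → q.eval (j : ℚ) = 0 := by
    intro j hj
    have hCmj : (m.choose j : ℚ) ≠ 0 := Nat.cast_ne_zero.mpr (Nat.choose_pos hj).ne'
    have hme : (m.factorial : ℚ) ≠ 0 := Nat.cast_ne_zero.mpr (Nat.factorial_ne_zero m)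
    have hcj := hcoeff j
    have hsum : ∑ i ∈ Finset.Icc 1 t, β (2 * i) * ((j : ℚ) ^ (2 * i) * m.choose j)
        = (∑ i ∈ Finset.Icc 1 t, β (2 * i) * (j : ℚ) ^ (2 * i)) * (m.choose j : ℚ) := by
      rw [Finset.sum_mul]
      exact Finset.sum_congr rfl (by intros; ring)
    rw [hsum] at hcj
    set S : ℚ := ∑ i ∈ Finset.Icc 1 t, β (2 * i) * (j : ℚ) ^ (2 * i) with hS
    have hqe : q.eval (j : ℚ) = β₁ * j + S - c * j.descFactorial n := by
      simp [hq, eval_finset_sum, descPochhammer_eval_eq_descFactorial, hS]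
    rw [hqe]
    by_cases hnj : n ≤ j
    · rw [if_pos hnj] at hcj
      have hk := key_fact m n j hnj hj
      have h' : (β₁ * (j : ℚ) + S) * (m.choose j : ℚ)
          = -(a * ((m - n).choose (j - n) : ℚ)) := by linear_combination hcj
      have h'' : c * (j.descFactorial n : ℚ) * (m.choose j : ℚ)
          = -(a * ((m - n).choose (j - n) : ℚ)) := by
        rw [hc]
        field_simp
        linear_combination (-a) * hk
      have := mul_right_cancel₀ hCmj (h'.trans h''.symm)
      linarith
    · rw [if_neg hnj] at hcj
      have hdf : j.descFactorial n = 0 := Nat.descFactorial_eq_zero_iff_lt.mpr (by omega)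
      rw [hdf]
      have h' : (β₁ * (j : ℚ) + S) * (m.choose j : ℚ) = 0 := by linear_combination hcj
      have := (mul_eq_zero.mp h').resolve_right hCmj
      push_cast
      linarith
  -- degree bound
  have hdeg : q.natDegree < m + 1 := by
    have h1 : (C β₁ * X).natDegree ≤ m := le_trans (natDegree_C_mul_le _ _) (by simp; omega)
    have h2 : (∑ i ∈ Finset.Icc 1 t, C (β (2 * i)) * X ^ (2 * i)).natDegree ≤ m := by
      apply natDegree_sum_le_of_forall_le
      intro i hi
      refine le_trans (natDegree_C_mul_le _ _) ?_
      rw [natDegree_X_pow]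
      simp only [Finset.mem_Icc] at hi
      omega
    have h3 : (C c * descPochhammer ℚ n).natDegree ≤ m := by
      refine le_trans (natDegree_C_mul_le _ _) ?_
      rw [descPochhammer_natDegree]
      omega
    have := natDegree_sub_le (C β₁ * X + ∑ i ∈ Finset.Icc 1 t, C (β (2 * i)) * X ^ (2 * i))
      (C c * descPochhammer ℚ n)
    have h12 := natDegree_add_le (C β₁ * X) (∑ i ∈ Finset.Icc 1 t, C (β (2 * i)) * X ^ (2 * i))
    rw [hq]
    omega
  -- q = 0
  have hq0 : q = 0 := by
    apply eq_zero_of_natDegree_lt_card_of_eval_eq_zero q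
      (f := fun i : Fin (m + 1) => ((i : ℕ) : ℚ))
    · intro i j hij
      have : (i : ℕ) = (j : ℕ) := Nat.cast_injective hij
      exact Fin.ext this
    · intro i
      exact heval i (Nat.lt_succ_iff.mp i.isLt)
    · simpa using hdeg
  -- extract coefficient
  intro i hi1 hit hni
  have hcq := congrArg (fun p => Polynomial.coeff p (2 * i)) hq0
  simp only [hq, coeff_sub, coeff_add, coeff_C_mul, finset_sum_coeff, coeff_zero,
    coeff_X_pow] at hcq
  rw [Finset.sum_eq_single i (fun b _ hb => by
      rw [if_neg (show ¬(2 * i = 2 * b) by omega)]; ring) (fun hni' => by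
      exact absurd (Finset.mem_Icc.mpr ⟨hi1, hit⟩) hni')] at hcq
  rw [if_pos rfl, mul_one] at hcq
  have hX : (X : Polynomial ℚ).coeff (2 * i) = 0 := by
    rw [coeff_X]
    split
    · omega
    · rfl
  rw [hX, mul_zero, zero_add] at hcq
  have hdp : (descPochhammer ℚ n).coeff (2 * i) = 0 := by
    apply coeff_eq_zero_of_natDegree_lt
    rw [descPochhammer_natDegree]
    omega
  rw [hdp, mul_zero, sub_zero] at hcq
  exact hcq
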